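/- For α ≥ 0 and τ ∈ ℝ with σ := 1/√(1+τ²), ∫_0^α φ(τx)·φ(x) dx = σ·φ(0)·(Φ(α/σ) − 1/2). -/

import Mathlib

open MeasureTheory

/-- Standard normal pdf. -/
noncomputable def gpdf (x : ℝ) : ℝ := (Real.sqrt (2 * Real.pi))⁻¹ * Real.exp (-x ^ 2 / 2)

/-- Standard normal cdf. -/
noncomputable def gcdf (x : ℝ) : ℝ := ∫ t in Set.Iic x, gpdf t

lemma gpdf_integrable : MeasureTheory.Integrable gpdf := by
  have h : Integrable (fun x : ℝ => Real.exp (-(1/2) * x ^ 2)) := integrable_exp_neg_mul_sq (by norm_num)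
  have := h.const_mul (Real.sqrt (2 * Real.pi))⁻¹
  refine this.congr (Filter.Eventually.of_forall fun x => ?_)
  rw [gpdf, show -x^2/2 = -(1/2)*x^2 by ring]

lemma gpdf_total : (∫ x : ℝ, gpdf x) = 1 := by
  have h := integral_gaussian (1/2 : ℝ)
  have h2 : (∫ x : ℝ, Real.exp (-(1/2) * x ^ 2)) = Real.sqrt (2 * Real.pi) := by
    rw [h]; rw [show Real.pi/(1/2) = 2*Real.pi by ring]
  have : (∫ x : ℝ, gpdf x) = (Real.sqrt (2 * Real.pi))⁻¹ * ∫ x : ℝ, Real.exp (-(1/2) * x ^ 2) := by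
    rw [← integral_const_mul]
    congr 1; ext x; rw [gpdf, show -x^2/2 = -(1/2)*x^2 by ring]
  rw [this, h2, inv_mul_cancel₀]
  positivity

lemma gcdf_zero : gcdf 0 = 1 / 2 := by
  have hsymm : (∫ x in Set.Iic (0:ℝ), gpdf x) = ∫ x in Set.Ioi (0:ℝ), gpdf x := by
    have := integral_comp_neg_Iic (0:ℝ) gpdf
    rw [neg_zero] at this
    rw [← this]
    congr 1; ext x; rw [gpdf, gpdf, neg_pow, show (-1:ℝ)^2 = 1 by norm_num, one_mul]
  have hsum : (∫ x in Set.Iic (0:ℝ), gpdf x) + (∫ x in Set.Ioi (0:ℝ), gpdf x) = 1 := by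
    rw [intervalIntegral.integral_Iic_add_Ioi gpdf_integrable.integrableOn
      gpdf_integrable.integrableOn, gpdf_total]
  unfold gcdf
  linarith [hsum, hsymm]

/-- For α ≥ 0, τ ∈ ℝ, σ = 1/√(1+τ²),
∫₀^α φ(τx)φ(x)dx = σφ(0)(Φ(α/σ) − 1/2). -/
theorem stmt13 (α τ : ℝ) (hα : 0 ≤ α) :
    let σ : ℝ := 1 / Real.sqrt (1 + τ ^ 2)
    (∫ x in (0 : ℝ)..α, gpdf (τ * x) * gpdf x) = σ * gpdf 0 * (gcdf (α / σ) - 1 / 2) := by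
  intro σ
  have h1 : (0:ℝ) < 1 + τ ^ 2 := by positivity
  have hs : Real.sqrt (1 + τ ^ 2) > 0 := Real.sqrt_pos.mpr h1
  have hσ : 0 < σ := by positivity
  have hsq : Real.sqrt (1 + τ ^ 2) ^ 2 = 1 + τ ^ 2 := Real.sq_sqrt h1.le
  have key : ∀ x : ℝ, gpdf (τ * x) * gpdf x = gpdf 0 * gpdf (x / σ) := by
    intro x
    simp only [gpdf]
    have : (x / σ) ^ 2 = (1 + τ ^ 2) * x ^ 2 := by
      field_simp [σ]
      have hσ2 : σ ^ 2 * (1 + τ ^ 2) = 1 := by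
        show (1 / Real.sqrt (1 + τ ^ 2)) ^ 2 * (1 + τ ^ 2) = 1
        rw [div_pow, hsq, one_pow, one_div, inv_mul_cancel₀ h1.ne']
      rw [mul_assoc, hσ2, mul_one]
    rw [mul_mul_mul_comm, ← Real.exp_add, mul_mul_mul_comm, ← Real.exp_add, this]
    congr 2
    ring
  rw [intervalIntegral.integral_congr (fun x _ => key x),
    intervalIntegral.integral_const_mul, intervalIntegral.integral_comp_div (f := gpdf) hσ.ne',
    zero_div]
  have : (∫ x in (0:ℝ)..(α/σ), gpdf x) = gcdf (α/σ) - 1/2 := by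
    rw [← gcdf_zero]
    unfold gcdf
    rw [← intervalIntegral.integral_Iic_sub_Iic gpdf_integrable.integrableOn
      gpdf_integrable.integrableOn]
  rw [smul_eq_mul, this]
  ring
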